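/- The reduced dual objective f : ℝ^{n+m−1} → ℝ, f(x) = η Σ_{i=1}^n Σ_{j=1}^m exp((α_i + β_j − M_{ij})/η) − α^T a − (β_{−m})^T b_{−m} for x = (α, β_{−m}) with β_m = 0, is differentiable, and its gradient is given in closed form by ∇f(x) = (T 1_m − a, (T_{−m})^T 1_n − b_{−m}), where T is the matrix with entries T_{ij} = exp((α_i + β_j − M_{ij})/η), T_{−m} denotes T with its m-th column removed, and 1_k is the all-ones vector in ℝ^k. -/

import Mathlib

set_option maxHeartbeats 1000000

noncomputable def Qc (n m : ℕ) (j : Fin (m + 1)) :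
    EuclideanSpace ℝ (Fin n ⊕ Fin m) →L[ℝ] ℝ :=
  Fin.lastCases 0 (fun j' => EuclideanSpace.proj (Sum.inr j')) j

lemma Qc_apply (n m : ℕ) (j : Fin (m + 1)) (x : EuclideanSpace ℝ (Fin n ⊕ Fin m)) :
    Qc n m j x = Fin.snoc (α := fun _ => ℝ) (fun j' : Fin m => x (Sum.inr j')) 0 j := by
  induction j using Fin.lastCases with
  | last => simp [Qc]
  | cast j' => simp [Qc]

lemma grad_comp {ι : Type*} [Fintype ι] [DecidableEq ι]
    (f : EuclideanSpace ℝ ι → ℝ) (x : EuclideanSpace ℝ ι)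
    (L : EuclideanSpace ℝ ι →L[ℝ] ℝ) (h : HasFDerivAt f L x) (k : ι) :
    gradient f x k = L (EuclideanSpace.single k 1) := by
  have hg : gradient f x = (InnerProductSpace.toDual ℝ _).symm L := by
    rw [gradient, h.fderiv]
  rw [hg]
  have h2 := InnerProductSpace.toDual_symm_apply (𝕜 := ℝ) (y := L) (x := EuclideanSpace.single k 1)
  rw [EuclideanSpace.inner_single_right] at h2
  simpa using h2

/-- The reduced dual objective is differentiable, with gradient
`∇f(x) = (T 1_m − a, (T_{−m})^T 1_n − b_{−m})` (the paper's `m` equals our `m+1`,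
and the domain `ℝ^{n+m−1}` is represented as `EuclideanSpace ℝ (Fin n ⊕ Fin m)`). -/
theorem stmt10 (n m : ℕ) (hn : 1 ≤ n) (hm : 1 ≤ m)
    (M : Matrix (Fin n) (Fin (m + 1)) ℝ) (η : ℝ) (hη : 0 < η)
    (a : Fin n → ℝ) (b : Fin (m + 1) → ℝ)
    (ha : ∀ i, 0 < a i) (hb : ∀ j, 0 < b j)
    (hsa : ∑ i, a i = 1) (hsb : ∑ j, b j = 1)
    (f : EuclideanSpace ℝ (Fin n ⊕ Fin m) → ℝ)
    (hf : ∀ x : EuclideanSpace ℝ (Fin n ⊕ Fin m),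
      f x = η * ∑ i, ∑ j, Real.exp
          ((x (Sum.inl i) + Fin.snoc (α := fun _ => ℝ) (fun j' : Fin m => x (Sum.inr j')) 0 j
            - M i j) / η)
        - ∑ i, x (Sum.inl i) * a i
        - ∑ j : Fin m, x (Sum.inr j) * b (Fin.castSucc j)) :
    Differentiable ℝ f ∧
    ∀ x : EuclideanSpace ℝ (Fin n ⊕ Fin m),
      (∀ i : Fin n, gradient f x (Sum.inl i) =
        (∑ j, Real.exp
          ((x (Sum.inl i) + Fin.snoc (α := fun _ => ℝ) (fun j' : Fin m => x (Sum.inr j')) 0 j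
            - M i j) / η)) - a i) ∧
      (∀ j : Fin m, gradient f x (Sum.inr j) =
        (∑ i, Real.exp
          ((x (Sum.inl i) + Fin.snoc (α := fun _ => ℝ) (fun j' : Fin m => x (Sum.inr j')) 0
              (Fin.castSucc j) - M i (Fin.castSucc j)) / η)) - b (Fin.castSucc j)) := by
  have hfe : f = fun x => η * ∑ i, ∑ j, Real.exp
          ((EuclideanSpace.proj (𝕜 := ℝ) (Sum.inl i) x + Qc n m j x - M i j) / η)
        - ∑ i, EuclideanSpace.proj (𝕜 := ℝ) (Sum.inl i) x * a i
        - ∑ j : Fin m, EuclideanSpace.proj (𝕜 := ℝ) (Sum.inr j) x * b (Fin.castSucc j) := by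
    funext x
    rw [hf]
    simp [Qc_apply]

  have key : ∀ x : EuclideanSpace ℝ (Fin n ⊕ Fin m), HasFDerivAt f
      (η • (∑ i, ∑ j, Real.exp ((x (Sum.inl i) + Qc n m j x - M i j) / η) •
          (η⁻¹ • (EuclideanSpace.proj (Sum.inl i) + Qc n m j)))
        - ∑ i, a i • EuclideanSpace.proj (𝕜 := ℝ) (Sum.inl i)
        - ∑ j : Fin m, b (Fin.castSucc j) • EuclideanSpace.proj (𝕜 := ℝ) (Sum.inr j)) x := by
    intro x
    rw [hfe]
    have h1 : ∀ (i : Fin n) (j : Fin (m + 1)), HasFDerivAt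
        (fun y : EuclideanSpace ℝ (Fin n ⊕ Fin m) => Real.exp ((EuclideanSpace.proj (𝕜 := ℝ) (Sum.inl i) y + Qc n m j y - M i j) / η))
        (Real.exp ((x (Sum.inl i) + Qc n m j x - M i j) / η) •
          (η⁻¹ • (EuclideanSpace.proj (Sum.inl i) + Qc n m j))) x := by
      intro i j
      have hin : HasFDerivAt
          (fun y : EuclideanSpace ℝ (Fin n ⊕ Fin m) => (EuclideanSpace.proj (𝕜 := ℝ) (Sum.inl i) y + Qc n m j y - M i j) / η)
          (η⁻¹ • (EuclideanSpace.proj (Sum.inl i) + Qc n m j)) x := by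
        simp only [div_eq_mul_inv]
        exact ((((EuclideanSpace.proj (Sum.inl i) : EuclideanSpace ℝ (Fin n ⊕ Fin m) →L[ℝ] ℝ).hasFDerivAt.add
          (Qc n m j).hasFDerivAt).sub_const (M i j)).mul_const η⁻¹)
      have := hin.exp
      simpa using this
    have h2 : HasFDerivAt (fun y : EuclideanSpace ℝ (Fin n ⊕ Fin m) => ∑ i, ∑ j, Real.exp
        ((EuclideanSpace.proj (𝕜 := ℝ) (Sum.inl i) y + Qc n m j y - M i j) / η))
        (∑ i, ∑ j, Real.exp ((x (Sum.inl i) + Qc n m j x - M i j) / η) •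
          (η⁻¹ • (EuclideanSpace.proj (Sum.inl i) + Qc n m j))) x :=
      HasFDerivAt.fun_sum (fun i _ => HasFDerivAt.fun_sum (fun j _ => h1 i j))
    have h3 : HasFDerivAt (fun y : EuclideanSpace ℝ (Fin n ⊕ Fin m) => ∑ i, EuclideanSpace.proj (𝕜 := ℝ) (Sum.inl i) y * a i)
        (∑ i, a i • EuclideanSpace.proj (𝕜 := ℝ) (Sum.inl i)) x :=
      HasFDerivAt.fun_sum (fun i _ =>
        ((EuclideanSpace.proj (Sum.inl i) : EuclideanSpace ℝ (Fin n ⊕ Fin m) →L[ℝ] ℝ).hasFDerivAt.mul_const (a i)))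
    have h4 : HasFDerivAt (fun y : EuclideanSpace ℝ (Fin n ⊕ Fin m) => ∑ j : Fin m, EuclideanSpace.proj (𝕜 := ℝ) (Sum.inr j) y * b (Fin.castSucc j))
        (∑ j : Fin m, b (Fin.castSucc j) • EuclideanSpace.proj (𝕜 := ℝ) (Sum.inr j)) x :=
      HasFDerivAt.fun_sum (fun j _ =>
        ((EuclideanSpace.proj (Sum.inr j) : EuclideanSpace ℝ (Fin n ⊕ Fin m) →L[ℝ] ℝ).hasFDerivAt.mul_const (b (Fin.castSucc j))))
    exact ((h2.const_mul η).sub h3).sub h4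
  constructor
  · exact fun x => (key x).differentiableAt
  · intro x
    constructor
    · intro i
      rw [grad_comp f x _ (key x) (Sum.inl i)]
      simp only [ContinuousLinearMap.sub_apply, ContinuousLinearMap.smul_apply,
        ContinuousLinearMap.sum_apply, ContinuousLinearMap.add_apply, Qc_apply]
      have hsn : ∀ x₂ : Fin (m+1), Fin.snoc (α := fun _ => ℝ)
          (fun _ : Fin m => (0:ℝ)) 0 x₂ = 0 := by
        intro x₂
        induction x₂ using Fin.lastCases with
        | last => simp
        | cast j' => simp
      simp [hsn, EuclideanSpace.single_apply, smul_eq_mul, mul_ite, ite_mul,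
        Finset.sum_ite_eq', Finset.mul_sum, hη.ne']
      exact Finset.sum_congr rfl fun _ _ => by field_simp
    · intro j
      rw [grad_comp f x _ (key x) (Sum.inr j)]
      simp only [ContinuousLinearMap.sub_apply, ContinuousLinearMap.smul_apply,
        ContinuousLinearMap.sum_apply, ContinuousLinearMap.add_apply, Qc_apply]
      have hsn : ∀ x₂ : Fin (m+1), Fin.snoc (α := fun _ => ℝ)
          (fun j' : Fin m => if j' = j then (1:ℝ) else 0) 0 x₂ =
          if x₂ = Fin.castSucc j then 1 else 0 := by
        intro x₂
        induction x₂ using Fin.lastCases with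
        | last => simp [(Fin.castSucc_lt_last j).ne']
        | cast j' => simp [Fin.castSucc_inj]
      simp [hsn, EuclideanSpace.single_apply, smul_eq_mul, mul_ite, ite_mul,
        Finset.sum_ite_eq', Finset.mul_sum, hη.ne']
      exact Finset.sum_congr rfl fun _ _ => by field_simp
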